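/- arXiv:1809.03418 — 3 statements merged into one kernel-verified Lean document; each statement's English description precedes it below -/
import Mathlib

section
/- Let A_0, A_1, ..., A_n be Hermitian m×m matrices. If A_1, ..., A_n are positive semidefinite, then the polynomial p(z) = det(A_0 + z_1 A_1 + ... + z_n A_n) is stable, i.e., either p is identically zero or p(z) ≠ 0 whenever every coordinate z_j has strictly positive imaginary part. -/
open scoped ComplexOrder
open Matrix

lemma sum_mulVec' {k m : ℕ} (s : Finset (Fin k)) (M : Fin k → Matrix (Fin m) (Fin m) ℂ)
    (v : Fin m → ℂ) : (∑ i ∈ s, M i) *ᵥ v = ∑ i ∈ s, (M i) *ᵥ v := by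
  ext j
  simp only [Matrix.mulVec, dotProduct, Finset.sum_apply, Matrix.sum_apply,
    Finset.sum_mul]
  rw [Finset.sum_comm]

/-- A function `p : (Fin n → ℂ) → ℂ` (thought of as a polynomial) is *stable* if it is
identically zero or has no zeros in `ℍⁿ`. -/
theorem stmt_0 (n m : ℕ) (A : Fin (n + 1) → Matrix (Fin m) (Fin m) ℂ)
    (hHerm : ∀ i, (A i).IsHermitian)
    (hPSD : ∀ i : Fin n, (A i.succ).PosSemidef)
    (p : (Fin n → ℂ) → ℂ)
    (hp : ∀ z : Fin n → ℂ, p z = (A 0 + ∑ i : Fin n, z i • A i.succ).det) :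
    (∀ z, p z = 0) ∨ ∀ z : Fin n → ℂ, (∀ j, 0 < (z j).im) → p z ≠ 0 := by
  by_cases h : ∃ z : Fin n → ℂ, (∀ j, 0 < (z j).im) ∧ p z = 0
  · left
    obtain ⟨z, hz, hpz⟩ := h
    -- Get nonzero kernel vector
    rw [hp z] at hpz
    obtain ⟨v, hv, hMv⟩ := Matrix.exists_mulVec_eq_zero_iff.mpr hpz
    -- expand M *ᵥ v
    have hexp : (A 0) *ᵥ v + ∑ i : Fin n, z i • ((A i.succ) *ᵥ v) = 0 := by
      rw [← hMv, Matrix.add_mulVec, sum_mulVec']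
      congr 1
      refine Finset.sum_congr rfl fun i _ => ?_
      rw [Matrix.smul_mulVec]
    -- quadratic forms
    set a : Fin n → ℂ := fun i => star v ⬝ᵥ (A i.succ) *ᵥ v with ha
    have ha_nonneg : ∀ i, 0 ≤ a i := fun i => (hPSD i).dotProduct_mulVec_nonneg v
    have hc : star v ⬝ᵥ (A 0) *ᵥ v + ∑ i : Fin n, z i * a i = 0 := by
      have h2 := congrArg (fun w => star v ⬝ᵥ w) hexp
      simp only [dotProduct_add, dotProduct_zero] at h2
      rw [← h2]
      congr 1
      simp only [dotProduct, Finset.sum_apply, Pi.smul_apply, smul_eq_mul, ha,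
        Finset.mul_sum]
      rw [Finset.sum_comm]
      refine Finset.sum_congr rfl fun i _ => Finset.sum_congr rfl fun k _ => ?_
      ring
    -- A 0 quadratic form is real
    have hc0 : (star v ⬝ᵥ (A 0) *ᵥ v).im = 0 := by
      have h1 : star (star v ⬝ᵥ (A 0) *ᵥ v) = star v ⬝ᵥ (A 0) *ᵥ v := by
        nth_rewrite 2 [← (hHerm 0)]
        rw [Matrix.star_dotProduct, Matrix.star_mulVec, star_star,
          Matrix.dotProduct_mulVec, Matrix.vecMul_conjTranspose, star_star]
      rw [← Complex.conj_eq_iff_im]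
      exact h1
    -- imaginary parts
    have him : ∑ i : Fin n, (z i).im * (a i).re = 0 := by
      have := congrArg Complex.im hc
      simp only [Complex.add_im, Complex.zero_im, Complex.im_sum, Complex.mul_im] at this
      have haim : ∀ i, (a i).im = 0 := fun i => by
        have := ha_nonneg i
        rw [Complex.le_def] at this
        simpa using this.2.symm
      rw [hc0] at this
      simp only [haim, mul_zero, zero_add, add_zero] at this
      linarith [this]
    have hare : ∀ i, (a i).re = 0 := by
      intro i
      have hnn : ∀ i ∈ Finset.univ, 0 ≤ (z i).im * (a i).re := fun i _ => by
        have h1 := (ha_nonneg i)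
        rw [Complex.le_def] at h1
        have := h1.1
        simp only [Complex.zero_re] at this
        exact mul_nonneg (le_of_lt (hz i)) this
      have := (Finset.sum_eq_zero_iff_of_nonneg hnn).mp him i (Finset.mem_univ i)
      rcases mul_eq_zero.mp this with h | h
      · exact absurd h (ne_of_gt (hz i))
      · exact h
    have hazero : ∀ i, a i = 0 := fun i => Complex.ext (hare i) (by
      have := ha_nonneg i
      rw [Complex.le_def] at this
      simpa using this.2.symm)
    -- kernel of each A i.succ
    have hAv : ∀ i : Fin n, (A i.succ) *ᵥ v = 0 := fun i =>
      ((hPSD i).dotProduct_mulVec_zero_iff v).mp (hazero i)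
    have hA0v : (A 0) *ᵥ v = 0 := by
      have : ∑ i : Fin n, z i • ((A i.succ) *ᵥ v) = 0 := by
        simp [hAv]
      rw [this, add_zero] at hexp
      exact hexp
    intro w
    rw [hp w, ← Matrix.exists_mulVec_eq_zero_iff]
    refine ⟨v, hv, ?_⟩
    rw [Matrix.add_mulVec, sum_mulVec', hA0v]
    simp only [Matrix.smul_mulVec, hAv, smul_zero]
    simp
  · right
    intro z hz hpz
    exact h ⟨z, hz, hpz⟩
end

section
/- If p ∈ ℂ[x_1,...,x_n] is a stable polynomial, then its partial derivative ∂p/∂x_1 is also stable. -/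
open MvPolynomial

/-- A polynomial `p ∈ ℂ[x₁,…,xₙ]` is *stable* if it is identically zero or has no zeros
in `ℍⁿ`, where `ℍ` is the open upper half-plane. -/
def Stable {n : ℕ} (p : MvPolynomial (Fin n) ℂ) : Prop :=
  p = 0 ∨ ∀ z : Fin n → ℂ, (∀ i, 0 < (z i).im) → eval z p ≠ 0

noncomputable def Complex.abs : AbsoluteValue ℂ ℝ :=
  IsAbsoluteValue.toAbsoluteValue (norm : ℂ → ℝ)

@[simp] lemma Complex.abs_apply (z : ℂ) : Complex.abs z = ‖z‖ := rfl

lemma Complex.abs_ofReal (r : ℝ) : Complex.abs (r : ℂ) = |r| := by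
  simp [Complex.norm_real]

lemma Complex.abs_I : Complex.abs Complex.I = 1 := by simp

section Aux
open Polynomial

lemma finSuccEquiv_pderiv_zero {n : ℕ} (p : MvPolynomial (Fin (n + 1)) ℂ) :
    finSuccEquiv ℂ n (pderiv 0 p) = Polynomial.derivative (finSuccEquiv ℂ n p) := by
  induction p using MvPolynomial.induction_on with
  | C a => simp [pderiv_C, finSuccEquiv_apply]
  | add p q hp hq => simp [map_add, hp, hq]
  | mul_X p i hp =>
    simp only [pderiv_mul, map_add, map_mul, derivative_mul, hp]
    rw [add_right_inj]
    induction i using Fin.cases with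
    | zero => simp [pderiv_X_self, finSuccEquiv_X_zero]
    | succ j =>
      rw [pderiv_X_of_ne (Fin.succ_ne_zero j), finSuccEquiv_X_succ]
      simp

namespace Polynomial

/-- Logarithmic derivative identity for a product of linear factors. -/
lemma deriv_eval_prod (a t : ℂ) (M : Multiset ℂ) (h : ∀ r ∈ M, r ≠ t) :
    Polynomial.eval t (Polynomial.derivative
        (Polynomial.C a * (M.map fun r => Polynomial.X - Polynomial.C r).prod)) =
      Polynomial.eval t (Polynomial.C a * (M.map fun r => Polynomial.X - Polynomial.C r).prod) *
        (M.map fun r => (t - r)⁻¹).sum := by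
  induction M using Multiset.induction_on with
  | empty => simp
  | cons r M ih =>
    have hr : r ≠ t := h r (Multiset.mem_cons_self r M)
    have h' : ∀ x ∈ M, x ≠ t := fun x hx => h x (Multiset.mem_cons_of_mem hx)
    have htr : t - r ≠ 0 := sub_ne_zero.mpr (Ne.symm hr)
    simp only [Multiset.map_cons, Multiset.prod_cons, Multiset.sum_cons]
    rw [mul_comm (X - C r), ← mul_assoc, derivative_mul, eval_add, eval_mul, eval_mul, ih h']
    simp only [derivative_sub, derivative_X, derivative_C, sub_zero, eval_one, eval_sub, eval_X,
      eval_C, eval_mul]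
    field_simp
    ring

/-- Multiset sum of complex numbers with negative imaginary parts, nonempty: sum has
negative imaginary part. -/
lemma multiset_sum_im_neg (M : Multiset ℂ) (hM : M ≠ 0) (h : ∀ x ∈ M, x.im < 0) :
    M.sum.im < 0 := by
  induction M using Multiset.induction_on with
  | empty => exact absurd rfl hM
  | cons r M ih =>
    rcases eq_or_ne M 0 with rfl | hM0
    · simpa using h r (Multiset.mem_cons_self r 0)
    · have h1 := h r (Multiset.mem_cons_self r M)
      have h2 := ih hM0 fun x hx => h x (Multiset.mem_cons_of_mem hx)
      simp only [Multiset.sum_cons, Complex.add_im]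
      linarith

/-- Gauss–Lucas for the upper half-plane: if a nonconstant complex polynomial has no
roots in the open upper half-plane, neither does its derivative. -/
lemma deriv_ne_zero_of_no_roots (f : Polynomial ℂ)
    (hf : ∀ z : ℂ, 0 < z.im → f.eval z ≠ 0) (hd : 1 ≤ f.natDegree)
    {t : ℂ} (ht : 0 < t.im) : (Polynomial.derivative f).eval t ≠ 0 := by
  have hf0 : f ≠ 0 := by
    intro h
    exact hf Complex.I (by simp) (by simp [h])
  have hsplit : Splits f := IsAlgClosed.splits f
  have hfact := hsplit.eq_prod_roots
  have hroots_im : ∀ r ∈ f.roots, r.im ≤ 0 := by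
    intro r hr
    by_contra h
    exact hf r (lt_of_not_ge h) ((Polynomial.mem_roots hf0).mp hr)
  have hne : ∀ r ∈ f.roots, r ≠ t := by
    intro r hr h
    exact hf t ht (h ▸ ((Polynomial.mem_roots hf0).mp hr))
  have hcard : f.roots ≠ 0 := by
    intro h
    have := hsplit.natDegree_eq_card_roots
    rw [h] at this
    simp at this
    omega
  have hsum : ((f.roots.map fun r => (t - r)⁻¹).sum).im < 0 := by
    apply multiset_sum_im_neg
    · simpa using hcard
    · intro x hx
      obtain ⟨r, hr, rfl⟩ := Multiset.mem_map.mp hx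
      have h1 : 0 < (t - r).im := by
        have := hroots_im r hr
        simp only [Complex.sub_im]
        linarith
      have h2 : t - r ≠ 0 := fun h => by simp [h] at h1
      rw [Complex.inv_im]
      apply div_neg_of_neg_of_pos
      · linarith
      · exact Complex.normSq_pos.mpr h2
  have key := deriv_eval_prod f.leadingCoeff t f.roots hne
  rw [← hfact] at key
  rw [key]
  apply mul_ne_zero (hf t ht)
  intro h
  rw [h] at hsum
  simp at hsum


lemma prod_map_ratio_le (s1 : ℂ) (r : ℝ) (hr : 0 < r) (hs1 : Complex.abs s1 ≤ r)
    (M : Multiset ℂ) (hM : ∀ z ∈ M, 2 * r ≤ Complex.abs z) :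
    (2/3 : ℝ) ^ Multiset.card M * (M.map fun z => Complex.abs (s1 - z)).prod ≤
      (M.map Complex.abs).prod := by
  induction M using Multiset.induction_on with
  | empty => simp
  | cons z M ih =>
    have hz := hM z (Multiset.mem_cons_self z M)
    have hM' : ∀ x ∈ M, 2 * r ≤ Complex.abs x := fun x hx => hM x (Multiset.mem_cons_of_mem hx)
    have key : (2/3 : ℝ) * Complex.abs (s1 - z) ≤ Complex.abs z := by
      have h1 : Complex.abs (s1 - z) ≤ Complex.abs s1 + Complex.abs z := by
        simpa [sub_eq_add_neg] using Complex.abs.add_le s1 (-z)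
      nlinarith [Complex.abs.nonneg (s1 - z), Complex.abs.nonneg z, Complex.abs.nonneg s1]
    simp only [Multiset.map_cons, Multiset.prod_cons, Multiset.card_cons, pow_succ]
    have hprodnn : (0:ℝ) ≤ (M.map fun z => Complex.abs (s1 - z)).prod :=
      Multiset.prod_nonneg (by
        intro x hx
        obtain ⟨y, _, rfl⟩ := Multiset.mem_map.mp hx
        exact Complex.abs.nonneg _)
    calc (2/3:ℝ) ^ Multiset.card M * (2/3) *
          (Complex.abs (s1 - z) * (M.map fun z => Complex.abs (s1 - z)).prod)
        = ((2/3) * Complex.abs (s1 - z)) *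
            ((2/3:ℝ) ^ Multiset.card M * (M.map fun z => Complex.abs (s1 - z)).prod) := by ring
      _ ≤ Complex.abs z * (M.map Complex.abs).prod := by
          apply mul_le_mul key (ih hM') (by positivity)
          exact (Complex.abs.nonneg z)

/-- Ratio bound: if all roots of `f` are at distance `≥ 2r` from `0`, then
`|f(0)|` is comparable with `|f(s1)|` for `|s1| ≤ r`. -/
lemma ratio_bound (f : Polynomial ℂ) (r : ℝ) (hr : 0 < r)
    (hroots : ∀ z ∈ f.roots, 2 * r ≤ Complex.abs z)
    (s1 : ℂ) (hs1 : Complex.abs s1 ≤ r) (m : ℕ) (hm : f.natDegree ≤ m) :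
    (2/3 : ℝ) ^ m * Complex.abs (f.eval s1) ≤ Complex.abs (f.eval 0) := by
  have hsplit : Splits f := IsAlgClosed.splits f
  have hfact := hsplit.eq_prod_roots
  have hcard : Multiset.card f.roots ≤ m := le_trans (Polynomial.card_roots' f) hm
  have habs : ∀ x : ℂ, Complex.abs (f.eval x) =
      Complex.abs f.leadingCoeff * ((f.roots.map fun z => Complex.abs (x - z)).prod) := by
    intro x
    conv_lhs => rw [hfact]
    rw [eval_mul, eval_C, map_mul, Polynomial.eval_multiset_prod]
    congr 1
    rw [map_multiset_prod]
    simp only [Multiset.map_map, Function.comp]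
    congr 1
    apply Multiset.map_congr rfl
    intro z _
    simp
  rw [habs 0, habs s1]
  have h0 : ∀ z : ℂ, Complex.abs (0 - z) = Complex.abs z := by intro z; simp
  have hstep := prod_map_ratio_le s1 r hr hs1 f.roots hroots
  have hpow : (2/3:ℝ) ^ m ≤ (2/3:ℝ) ^ Multiset.card f.roots := by
    apply pow_le_pow_of_le_one (by norm_num) (by norm_num) hcard
  have hprodnn : (0:ℝ) ≤ (f.roots.map fun z => Complex.abs (s1 - z)).prod :=
    Multiset.prod_nonneg (by
      intro x hx
      obtain ⟨y, _, rfl⟩ := Multiset.mem_map.mp hx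
      exact Complex.abs.nonneg _)
  have h1 : (2/3:ℝ) ^ m * (f.roots.map fun z => Complex.abs (s1 - z)).prod ≤
      (f.roots.map Complex.abs).prod := by
    calc (2/3:ℝ) ^ m * (f.roots.map fun z => Complex.abs (s1 - z)).prod
        ≤ (2/3:ℝ) ^ Multiset.card f.roots * (f.roots.map fun z => Complex.abs (s1 - z)).prod :=
          mul_le_mul_of_nonneg_right hpow hprodnn
      _ ≤ _ := hstep
  have heq : (f.roots.map fun z => Complex.abs (0 - z)).prod = (f.roots.map Complex.abs).prod := by
    congr 1
    exact Multiset.map_congr rfl fun z _ => by simp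
  rw [heq]
  calc (2/3:ℝ) ^ m * (Complex.abs f.leadingCoeff *
        (f.roots.map fun z => Complex.abs (s1 - z)).prod)
      = Complex.abs f.leadingCoeff *
        ((2/3:ℝ) ^ m * (f.roots.map fun z => Complex.abs (s1 - z)).prod) := by ring
    _ ≤ Complex.abs f.leadingCoeff * (f.roots.map Complex.abs).prod :=
        mul_le_mul_of_nonneg_left h1 (Complex.abs.nonneg _)

/-- Leading coefficient of a "stable" polynomial in `ℂ[x₁..xₙ][X]` does not vanish
on the open polydisc `ℍⁿ`. -/
lemma lead_eval_ne_zero {n : ℕ} (q : Polynomial (MvPolynomial (Fin n) ℂ)) (hq0 : q ≠ 0)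
    (hq : ∀ (w : Fin n → ℂ) (t : ℂ), (∀ i, 0 < (w i).im) → 0 < t.im →
      (q.map (MvPolynomial.eval w)).eval t ≠ 0)
    (w0 : Fin n → ℂ) (hw0 : ∀ i, 0 < (w0 i).im) :
    MvPolynomial.eval w0 q.leadingCoeff ≠ 0 := by
  intro h0
  set d := q.natDegree with hd
  have hlc : q.leadingCoeff ≠ 0 := Polynomial.leadingCoeff_ne_zero.mpr hq0
  -- a point where the leading coefficient doesn't vanish
  obtain ⟨w1, hw1⟩ : ∃ w1 : Fin n → ℂ, MvPolynomial.eval w1 q.leadingCoeff ≠ 0 := by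
    by_contra h
    push_neg at h
    exact hlc (MvPolynomial.funext fun x => by simpa using h x)
  -- the line from w0 towards w1
  set wl : ℂ → Fin n → ℂ := fun s i => w0 i + s * (w1 i - w0 i) with hwl
  set F : Fin n → Polynomial ℂ :=
    fun i => Polynomial.C (w0 i) + Polynomial.X * Polynomial.C (w1 i - w0 i) with hF
  set U : ℕ → Polynomial ℂ := fun k => MvPolynomial.aeval F (q.coeff k) with hUdef
  have hU : ∀ (x : MvPolynomial (Fin n) ℂ) (s : ℂ),
      (MvPolynomial.aeval F x).eval s = MvPolynomial.eval (wl s) x := by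
    intro x s
    induction x using MvPolynomial.induction_on with
    | C a => simp
    | add p q hp hq => simp [hp, hq]
    | mul_X p i hp =>
      rw [map_mul, MvPolynomial.aeval_X, Polynomial.eval_mul, hp, MvPolynomial.eval_mul,
        MvPolynomial.eval_X]
      congr 1
      simp [hF, hwl]
  -- δ : radius within which the line stays in ℍⁿ
  obtain ⟨δ, hδpos, hδ⟩ : ∃ δ > 0, ∀ s : ℂ, Complex.abs s < δ → ∀ i, 0 < ((wl s) i).im := by
    have hS : IsOpen {s : ℂ | ∀ i, 0 < ((wl s) i).im} := by
      rw [Set.setOf_forall]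
      apply isOpen_iInter_of_finite
      intro i
      apply isOpen_lt continuous_const
      exact Complex.continuous_im.comp ((continuous_const.add
        ((continuous_id.mul continuous_const))))
    have h0S : (0 : ℂ) ∈ {s : ℂ | ∀ i, 0 < ((wl s) i).im} := by
      intro i
      simpa [hwl] using hw0 i
    obtain ⟨δ, hδpos, hball⟩ := Metric.isOpen_iff.mp hS 0 h0S
    exact ⟨δ, hδpos, fun s hs => hball (by simpa [Complex.dist_eq] using hs)⟩
  set r : ℝ := δ / 3 with hr
  have hrpos : 0 < r := by positivity
  -- choose s1 with |s1| ≤ r where U d doesn't vanish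
  have hUd : U d ≠ 0 := by
    intro h
    apply hw1
    have h1 : (U d).eval 1 = MvPolynomial.eval (wl 1) q.leadingCoeff := by
      rw [hUdef]
      exact hU q.leadingCoeff 1
    have h2 : wl 1 = w1 := by funext i; simp [hwl]
    rw [h, h2] at h1
    simpa using h1.symm
  obtain ⟨s1, hs1r, hs1⟩ : ∃ s1 : ℂ, Complex.abs s1 ≤ r ∧ (U d).eval s1 ≠ 0 := by
    have hinf : Set.Infinite (Complex.ofReal '' Set.Ioo 0 r) :=
      (Set.Ioo_infinite hrpos).image (Complex.ofReal_injective.injOn)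
    obtain ⟨s1, hs1⟩ := (hinf.diff (Polynomial.finite_setOf_isRoot hUd)).nonempty
    obtain ⟨⟨x, hx, rfl⟩, hnr⟩ := hs1
    refine ⟨x, ?_, hnr⟩
    rw [Complex.abs_ofReal, abs_of_pos hx.1]
    exact le_of_lt hx.2
  -- the univariate family
  set g : ℂ → Polynomial ℂ :=
    fun c => ∑ k ∈ Finset.range (d+1), Polynomial.C (c^k) * U k with hgdef
  have hgeval : ∀ (c s : ℂ), (g c).eval s = (q.map (MvPolynomial.eval (wl s))).eval c := by
    intro c s
    have hdeg : (q.map (MvPolynomial.eval (wl s))).natDegree < d + 1 :=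
      Nat.lt_succ_of_le Polynomial.natDegree_map_le
    rw [Polynomial.eval_eq_sum_range' hdeg, hgdef]
    rw [Polynomial.eval_finset_sum]
    apply Finset.sum_congr rfl
    intro k _
    rw [Polynomial.eval_mul, Polynomial.eval_C, Polynomial.coeff_map, hUdef, hU, mul_comm]
  have hgne : ∀ (c : ℂ), 0 < c.im → ∀ s : ℂ, Complex.abs s < δ → (g c).eval s ≠ 0 := by
    intro c hc s hs
    rw [hgeval]
    exact hq (wl s) c (hδ s hs) hc
  set M : ℕ := ∑ k ∈ Finset.range (d+1), (U k).natDegree with hM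
  have hgdeg : ∀ c : ℂ, (g c).natDegree ≤ M := by
    intro c
    apply Polynomial.natDegree_sum_le_of_forall_le
    intro k hk
    exact le_trans (Polynomial.natDegree_C_mul_le _ _)
      (Finset.single_le_sum (f := fun k => (U k).natDegree) (fun _ _ => Nat.zero_le _) hk)
  set K : ℝ := (2/3 : ℝ) ^ M with hK
  have hKpos : 0 < K := by positivity
  -- the master inequality
  have main : ∀ c : ℂ, 0 < c.im →
      K * Complex.abs ((g c).eval s1) ≤ Complex.abs ((g c).eval 0) := by
    intro c hc
    apply ratio_bound (g c) r hrpos ?_ s1 hs1r M (hgdeg c)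
    intro z hz
    by_contra hlt
    push_neg at hlt
    have hzδ : Complex.abs z < δ := by
      rw [hr] at hlt
      linarith
    exact hgne c hc z hzδ (((Polynomial.mem_roots').mp hz).2)
  -- coefficient data
  set a : ℕ → ℝ := fun k => Complex.abs ((U k).eval 0) with ha
  set b : ℕ → ℝ := fun k => Complex.abs ((U k).eval s1) with hb
  set A : ℝ := ∑ k ∈ Finset.range d, a k with hA
  set B : ℝ := ∑ k ∈ Finset.range d, b k with hB
  have hAnn : 0 ≤ A := Finset.sum_nonneg fun k _ => Complex.abs.nonneg _
  have hBnn : 0 ≤ B := Finset.sum_nonneg fun k _ => Complex.abs.nonneg _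
  have hbd : 0 < b d := by
    rw [hb]
    exact AbsoluteValue.pos _ hs1
  have hUd0 : (U d).eval 0 = 0 := by
    have h1 : (U d).eval 0 = MvPolynomial.eval (wl 0) q.leadingCoeff := by
      rw [hUdef]; exact hU q.leadingCoeff 0
    have h2 : wl 0 = w0 := by funext i; simp [hwl]
    rw [h1, h2, h0]
  have habs : ∀ t : ℝ, 0 < t → Complex.abs (Complex.I * t) = t := by
    intro t ht
    rw [map_mul, Complex.abs_I, Complex.abs_ofReal, one_mul, abs_of_pos ht]
  have him : ∀ t : ℝ, 0 < t → 0 < (Complex.I * t).im := by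
    intro t ht
    simpa using ht
  have hgx : ∀ (c x : ℂ), (g c).eval x = ∑ k ∈ Finset.range (d+1), c^k * (U k).eval x := by
    intro c x
    rw [hgdef, Polynomial.eval_finset_sum]
    exact Finset.sum_congr rfl fun k _ => by rw [Polynomial.eval_mul, Polynomial.eval_C]
  -- upper bound for |(g c).eval 0|
  have upper : ∀ t : ℝ, 1 ≤ t →
      Complex.abs ((g (Complex.I * t)).eval 0) ≤ A * t^(d-1) := by
    intro t ht
    have htpos : (0:ℝ) < t := lt_of_lt_of_le one_pos ht
    rw [hgx, Finset.sum_range_succ, hUd0, mul_zero, add_zero]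
    calc Complex.abs (∑ k ∈ Finset.range d, (Complex.I * t)^k * (U k).eval 0)
        ≤ ∑ k ∈ Finset.range d, Complex.abs ((Complex.I * t)^k * (U k).eval 0) :=
          Complex.abs.sum_le _ _
      _ ≤ ∑ k ∈ Finset.range d, a k * t^(d-1) := by
          apply Finset.sum_le_sum
          intro k hk
          rw [map_mul, map_pow, habs t htpos, mul_comm]
          apply mul_le_mul_of_nonneg_left _ (Complex.abs.nonneg _)
          have hkd := Finset.mem_range.mp hk
          exact pow_le_pow_right₀ ht (by omega)
      _ = A * t^(d-1) := by rw [hA, Finset.sum_mul]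
  -- lower bound for |(g c).eval s1|
  have lower : ∀ t : ℝ, 1 ≤ t →
      b d * t^d - B * t^(d-1) ≤ Complex.abs ((g (Complex.I * t)).eval s1) := by
    intro t ht
    have htpos : (0:ℝ) < t := lt_of_lt_of_le one_pos ht
    rw [hgx, Finset.sum_range_succ]
    set S : ℂ := ∑ k ∈ Finset.range d, (Complex.I * (t:ℂ))^k * (U k).eval s1 with hSdef
    set T : ℂ := (Complex.I*(t:ℂ))^d * (U d).eval s1 with hTdef
    have htri : Complex.abs T - Complex.abs S ≤ Complex.abs (S + T) := by
      have h1 := Complex.abs.add_le (S + T) (-S)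
      have e : S + T + -S = T := by ring
      rw [e, map_neg_eq_map] at h1
      linarith
    have h2 : Complex.abs T = b d * t^d := by
      rw [hTdef, map_mul, map_pow, habs t htpos, mul_comm]
    have h3 : Complex.abs S ≤ B * t^(d-1) := by
      rw [hSdef]
      calc Complex.abs (∑ k ∈ Finset.range d, (Complex.I * (t:ℂ))^k * (U k).eval s1)
          ≤ ∑ k ∈ Finset.range d, Complex.abs ((Complex.I * (t:ℂ))^k * (U k).eval s1) :=
            Complex.abs.sum_le _ _
        _ ≤ ∑ k ∈ Finset.range d, b k * t^(d-1) := by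
            apply Finset.sum_le_sum
            intro k hk
            rw [map_mul, map_pow, habs t htpos, mul_comm]
            apply mul_le_mul_of_nonneg_left _ (Complex.abs.nonneg _)
            have hkd := Finset.mem_range.mp hk
            exact pow_le_pow_right₀ ht (by omega)
        _ = B * t^(d-1) := by rw [hB, Finset.sum_mul]
    linarith
  -- the contradiction
  have final : ∀ t : ℝ, 1 ≤ t → K * b d * t^d ≤ (A + K * B) * t^(d-1) := by
    intro t ht
    have h1 := main (Complex.I * t) (him t (lt_of_lt_of_le one_pos ht))
    have h2 := upper t ht
    have h3 := lower t ht
    have h4 : K * (b d * t^d - B * t^(d-1)) ≤ K * Complex.abs ((g (Complex.I*t)).eval s1) :=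
      mul_le_mul_of_nonneg_left h3 (le_of_lt hKpos)
    nlinarith
  rcases Nat.eq_zero_or_pos d with hd0 | hdpos
  · have hfin := final 1 le_rfl
    have hA0 : A = 0 := by rw [hA, hd0]; simp
    have hB0 : B = 0 := by rw [hB, hd0]; simp
    rw [hA0, hB0, one_pow, one_pow] at hfin
    nlinarith [mul_pos hKpos hbd]
  · set t : ℝ := max 1 ((A + K * B)/(K * b d) + 1) with htdef
    have ht1 : 1 ≤ t := le_max_left _ _
    have htpos : 0 < t := lt_of_lt_of_le one_pos ht1
    have ht2 : (A + K * B)/(K * b d) + 1 ≤ t := le_max_right _ _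
    have hKbd : 0 < K * b d := mul_pos hKpos hbd
    have ht3 : A + K * B < K * b d * t := by
      have h5 : (A + K * B)/(K * b d) < t := by linarith
      calc A + K * B = (A + K * B)/(K * b d) * (K * b d) := by field_simp
        _ < t * (K * b d) := by apply mul_lt_mul_of_pos_right h5 hKbd
        _ = K * b d * t := by ring
    have h6 := final t ht1
    have h7 : t^d = t * t^(d-1) := by
      conv_lhs => rw [show d = (d-1)+1 by omega]
      rw [pow_succ]
      ring
    have h8 : (0:ℝ) < t^(d-1) := pow_pos htpos _
    rw [h7] at h6
    have h9 : K * b d * (t * t^(d-1)) = (K * b d * t) * t^(d-1) := by ring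
    rw [h9] at h6
    have h10 := le_of_mul_le_mul_right h6 h8
    linarith

end Polynomial

end Aux

theorem stmt_1 (n : ℕ) (p : MvPolynomial (Fin (n + 1)) ℂ) (hp : Stable p) :
    Stable (pderiv 0 p) := by
  rcases hp with rfl | hp
  · left; simp
  by_cases hp0 : p = 0
  · left; simp [hp0]
  set q := finSuccEquiv ℂ n p with hq
  have hq0 : q ≠ 0 := by
    intro h
    exact hp0 ((map_eq_zero_iff _ (finSuccEquiv ℂ n).injective).mp h)
  have hqst : ∀ (w : Fin n → ℂ) (t : ℂ), (∀ i, 0 < (w i).im) → 0 < t.im →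
      (q.map (MvPolynomial.eval w)).eval t ≠ 0 := by
    intro w t hw ht
    rw [hq, ← eval_eq_eval_mv_eval']
    apply hp
    intro i
    induction i using Fin.cases with
    | zero => simpa using ht
    | succ j => simpa using hw j
  rcases Nat.eq_zero_or_pos q.natDegree with hd0 | hd1
  · left
    obtain ⟨c, hc⟩ := Polynomial.natDegree_eq_zero.mp hd0
    apply (finSuccEquiv ℂ n).injective
    rw [finSuccEquiv_pderiv_zero, map_zero, ← hq, ← hc]
    simp
  · right
    intro z hz
    set w : Fin n → ℂ := fun i => z i.succ with hw
    have hzw : z = Fin.cons (z 0) w := by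
      funext i
      induction i using Fin.cases with
      | zero => simp
      | succ j => simp [hw]
    have hlead := Polynomial.lead_eval_ne_zero q hq0 hqst w (fun i => hz i.succ)
    set f : Polynomial ℂ := q.map (MvPolynomial.eval w) with hf
    have hfc : f.coeff q.natDegree ≠ 0 := by
      rw [hf, Polynomial.coeff_map]
      exact hlead
    have hfd : 1 ≤ f.natDegree :=
      le_trans hd1 (Polynomial.le_natDegree_of_ne_zero hfc)
    have hfroots : ∀ t : ℂ, 0 < t.im → f.eval t ≠ 0 := fun t ht =>
      hqst w t (fun i => hz i.succ) ht
    have hkey : eval z (pderiv 0 p) = (Polynomial.derivative f).eval (z 0) := by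
      conv_lhs => rw [hzw]
      rw [eval_eq_eval_mv_eval', finSuccEquiv_pderiv_zero, ← hq, hf,
        ← Polynomial.derivative_map]
    rw [hkey]
    exact Polynomial.deriv_ne_zero_of_no_roots f hfroots hfd (hz 0)
end

section
/- If p ∈ ℂ[x_1,...,x_n] is stable and a ∈ ℂ has nonnegative imaginary part, then the polynomial obtained by substituting x_1 = a, i.e., q(x_2,...,x_n) = p(a, x_2,...,x_n), is stable. -/
open MvPolynomial Metric Set

lemma diff_eval {ι : Type*} {E : Type*} [NormedAddCommGroup E] [NormedSpace ℂ E]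
    (p : MvPolynomial ι ℂ) (g : E → ι → ℂ) (hg : ∀ i, Differentiable ℂ fun x => g x i) :
    Differentiable ℂ fun x => MvPolynomial.eval (g x) p := by
  induction p using MvPolynomial.induction_on with
  | C a => simpa using differentiable_const a
  | add p q hp hq => simp only [map_add]; exact hp.add hq
  | mul_X p i hp => simp only [map_mul, eval_X]; exact hp.mul (hg i)

/-- Specialization of a stable polynomial at `x₁ = a` with `Im a ≥ 0` is stable. -/
theorem stmt_2 (n : ℕ) (p : MvPolynomial (Fin (n + 1)) ℂ) (hp : Stable p)
    (a : ℂ) (ha : 0 ≤ a.im) (q : MvPolynomial (Fin n) ℂ)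
    (hq : ∀ z : Fin n → ℂ, eval z q = eval (Fin.cons a z) p) :
    Stable q := by
  classical
  rcases hp with hp | hp
  · left
    exact MvPolynomial.funext fun z => by rw [hq, hp]; simp
  by_cases hq0 : q = 0
  · exact Or.inl hq0
  right
  intro z₀ hz₀
  by_contra h0
  obtain ⟨w, hw⟩ : ∃ w, eval w q ≠ 0 := by
    by_contra hc; push_neg at hc
    exact hq0 (MvPolynomial.funext fun z => by simpa using hc z)
  set c : Fin n → ℂ := fun i => w i - z₀ i with hc_def
  set F : ℂ × ℂ → ℂ := fun xt => eval (Fin.cons xt.1 (fun i => z₀ i + xt.2 * c i)) p with hF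
  have hFdiff : Differentiable ℂ F := by
    apply diff_eval
    intro i
    refine Fin.cases ?_ ?_ i
    · simpa using differentiable_fst
    · intro j
      simpa using (differentiable_const _).add (differentiable_snd.mul (differentiable_const _))
  set g : ℂ → ℂ := fun t => F (a, t) with hgdef
  have hgq : ∀ t : ℂ, g t = eval (fun i => z₀ i + t * c i) q := fun t => (hq _).symm
  have hgdiff : Differentiable ℂ g :=
    hFdiff.comp ((differentiable_const a).prodMk differentiable_id)
  have hg0 : g 0 = 0 := by
    rw [hgq]; simpa using h0
  have hg1 : g 1 ≠ 0 := by
    rw [hgq]; simpa [hc_def] using hw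
  have hiso : ∀ᶠ t in nhdsWithin 0 {(0:ℂ)}ᶜ, g t ≠ 0 := by
    rcases (hgdiff.analyticAt 0).eventually_eq_zero_or_eventually_ne_zero with h | h
    · exfalso
      apply hg1
      have hA : AnalyticOnNhd ℂ g Set.univ := fun x _ => hgdiff.analyticAt x
      have := hA.eqOn_zero_of_preconnected_of_eventuallyEq_zero isPreconnected_univ
        (Set.mem_univ (0:ℂ)) h
      exact this (Set.mem_univ 1)
    · exact h
  obtain ⟨δ, hδpos, hδ⟩ : ∃ δ > 0, ∀ t : ℂ, t ≠ 0 → dist t 0 < δ → g t ≠ 0 := by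
    obtain ⟨ε, hεpos, hε⟩ := Metric.mem_nhdsWithin_iff.mp hiso
    exact ⟨ε, hεpos, fun t ht hd => hε ⟨Metric.mem_ball.mpr hd, ht⟩⟩
  have hS : IsOpen {t : ℂ | ∀ i, 0 < (z₀ i + t * c i).im} := by
    rw [Set.setOf_forall]
    refine isOpen_iInter_of_finite fun i => ?_
    exact isOpen_lt continuous_const (Complex.continuous_im.comp
      (continuous_const.add (continuous_id.mul continuous_const)))
  have h0S : (0:ℂ) ∈ {t : ℂ | ∀ i, 0 < (z₀ i + t * c i).im} := by
    simpa using hz₀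
  obtain ⟨δ₂, hδ₂pos, hδ₂⟩ := Metric.isOpen_iff.mp hS 0 h0S
  set r : ℝ := min δ δ₂ / 2 with hrdef
  have hrpos : 0 < r := by positivity
  have hmin2 : 0 < min δ δ₂ := lt_min hδpos hδ₂pos
  have hrlt : r < min δ δ₂ := by rw [hrdef]; exact div_lt_self hmin2 one_lt_two
  have hrδ : r < δ := hrlt.trans_le (min_le_left _ _)
  have hrδ₂ : r < δ₂ := hrlt.trans_le (min_le_right _ _)
  have hball : Metric.closedBall (0:ℂ) r ⊆ {t : ℂ | ∀ i, 0 < (z₀ i + t * c i).im} := by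
    intro t ht
    exact hδ₂ (lt_of_le_of_lt (Metric.mem_closedBall.mp ht) hrδ₂)
  have hsph : ∀ t ∈ Metric.sphere (0:ℂ) r, g t ≠ 0 := by
    intro t ht
    have htr : dist t 0 = r := Metric.mem_sphere.mp ht
    have htne : t ≠ 0 := by
      intro h
      rw [h, dist_self] at htr
      exact hrpos.ne htr
    exact hδ t htne (by rw [htr]; exact hrδ)
  obtain ⟨t₁, ht₁s, ht₁min⟩ := (isCompact_sphere (0:ℂ) r).exists_isMinOn
    (NormedSpace.sphere_nonempty.mpr hrpos.le) (hgdiff.continuous.norm.continuousOn)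
  set m : ℝ := ‖g t₁‖ with hmdef
  have hm : 0 < m := norm_pos_iff.mpr (hsph t₁ ht₁s)
  have hmin : ∀ t ∈ Metric.sphere (0:ℂ) r, m ≤ ‖g t‖ := fun t ht => ht₁min ht
  clear_value m
  set N : Set (ℂ × ℂ) := {xt | ‖F xt - g xt.2‖ < m / 2} with hNdef
  have hNopen : IsOpen N := by
    apply isOpen_lt _ continuous_const
    exact (hFdiff.continuous.sub (hgdiff.continuous.comp continuous_snd)).norm
  have hsub : ({a} : Set ℂ) ×ˢ Metric.sphere (0:ℂ) r ⊆ N := by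
    intro xt hxt
    have hx : xt = (a, xt.2) := Prod.ext_iff.mpr ⟨hxt.1, rfl⟩
    rw [hx]
    simp only [hNdef, Set.mem_setOf_eq]
    have : F (a, xt.2) = g xt.2 := rfl
    rw [this, sub_self, norm_zero]
    positivity
  obtain ⟨u, v, hu, hv, hau, hsv, huv⟩ := generalized_tube_lemma isCompact_singleton
    (isCompact_sphere (0:ℂ) r) hNopen hsub
  have hVopen : IsOpen (u ∩ {x : ℂ | ‖F (x, 0)‖ < m / 2}) := by
    refine hu.inter (isOpen_lt ?_ continuous_const)
    exact (hFdiff.continuous.comp (continuous_id.prodMk continuous_const)).norm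
  have haV : a ∈ u ∩ {x : ℂ | ‖F (x, 0)‖ < m / 2} := by
    refine ⟨hau rfl, ?_⟩
    have : F (a, 0) = g 0 := rfl
    simp only [Set.mem_setOf_eq, this, hg0, norm_zero]
    positivity
  obtain ⟨ρ, hρpos, hρ⟩ := Metric.isOpen_iff.mp hVopen a haV
  set x : ℂ := a + ((ρ / 2 : ℝ) : ℂ) * Complex.I with hxdef
  have hxu : x ∈ u ∩ {x : ℂ | ‖F (x, 0)‖ < m / 2} := by
    apply hρ
    rw [Metric.mem_ball, dist_eq_norm, hxdef]
    have h : a + ((ρ / 2 : ℝ) : ℂ) * Complex.I - a = ((ρ / 2 : ℝ) : ℂ) * Complex.I := by ring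
    rw [h, norm_mul, Complex.norm_I, mul_one, Complex.norm_real]
    rw [Real.norm_eq_abs, abs_of_pos (by positivity)]
    exact half_lt_self hρpos
  have hxim : 0 < x.im := by
    rw [hxdef]
    simp [Complex.add_im, Complex.mul_im]
    positivity
  set φ : ℂ → ℂ := fun t => F (x, t) with hφdef
  have hφdiff : Differentiable ℂ φ :=
    hFdiff.comp ((differentiable_const x).prodMk differentiable_id)
  have hφne : ∀ t ∈ Metric.closedBall (0:ℂ) r, φ t ≠ 0 := by
    intro t ht
    apply hp
    intro i
    refine Fin.cases ?_ ?_ i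
    · simpa using hxim
    · intro j
      simpa using hball ht j
  have hφsph : ∀ t ∈ Metric.sphere (0:ℂ) r, m / 2 ≤ ‖φ t‖ := by
    intro t ht
    have hN : (x, t) ∈ N := huv ⟨hxu.1, hsv ht⟩
    have h1 : ‖φ t - g t‖ < m / 2 := hN
    have h2 : m ≤ ‖g t‖ := hmin t ht
    have h3 : ‖g t‖ - ‖φ t‖ ≤ ‖g t - φ t‖ := norm_sub_norm_le _ _
    have h4 : ‖g t - φ t‖ = ‖φ t - g t‖ := norm_sub_rev _ _
    linarith
  have hdc : DiffContOnCl ℂ (fun t => (φ t)⁻¹) (Metric.ball (0:ℂ) r) := by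
    constructor
    · exact (hφdiff.differentiableOn).inv fun t ht =>
        hφne t (Metric.ball_subset_closedBall ht)
    · rw [closure_ball (0:ℂ) hrpos.ne']
      exact (hφdiff.continuous.continuousOn).inv₀ fun t ht => hφne t ht
  have key : ‖(φ 0)⁻¹‖ ≤ (m / 2)⁻¹ := by
    refine Complex.norm_le_of_forall_mem_frontier_norm_le Metric.isBounded_ball hdc ?_ ?_
    · intro z hz
      rw [frontier_ball (0:ℂ) hrpos.ne'] at hz
      rw [norm_inv]
      exact inv_anti₀ (by positivity) (hφsph z hz)
    · rw [closure_ball (0:ℂ) hrpos.ne']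
      exact Metric.mem_closedBall_self hrpos.le
  have hφ0ne : φ 0 ≠ 0 := hφne 0 (Metric.mem_closedBall_self hrpos.le)
  have hφ0lt : ‖φ 0‖ < m / 2 := hxu.2
  rw [norm_inv] at key
  have h2 : (m / 2)⁻¹ < ‖φ 0‖⁻¹ :=
    inv_strictAnti₀ (norm_pos_iff.mpr hφ0ne) hφ0lt
  exact lt_irrefl _ (h2.trans_le key)
end
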